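/- The map c ↦ c^{⟨d⟩} is (weakly) increasing in c, where for c with Macaulay expansion c = Σ_{i=1}^d binom(i + ε_i, i) in base d one defines c^{⟨d⟩} := Σ_{i=1}^d binom(i + ε_i + 1, i + 1). -/

import Mathlib

/-- The term `binom(i + e, i)` of a Macaulay expansion, with the convention that
it vanishes when `i + e < i` (e.g. `binom(i-1, i) = 0` for `e = -1`). -/
def macaulayTerm (i : ℕ) (e : ℤ) : ℕ := ((i : ℤ) + e).toNat.choose i

/-- `ε : Fin d → ℤ`, where `ε i` stands for `ε_{i+1}`, is the Macaulay expansion of `c`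
in base `d`. -/
def IsMacaulayExpansion (d c : ℕ) (ε : Fin d → ℤ) : Prop :=
  Monotone ε ∧ (∀ i, -1 ≤ ε i) ∧ c = ∑ i : Fin d, macaulayTerm (i.1 + 1) (ε i)

/-- Given the Macaulay expansion `c = ∑ binom(i + ε_i, i)` in base `d`,
`c^{⟨d⟩} = ∑ binom(i + ε_i + 1, i + 1)`; here the `i`-th summand is
`macaulayTerm (i+1) (ε i)` in our indexing. -/
def macaulayUpper (d : ℕ) (ε : Fin d → ℤ) : ℕ :=
  ∑ i : Fin d, macaulayTerm (i.1 + 2) (ε i)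

lemma macaulayTerm_mono (k : ℕ) {e e' : ℤ} (h : e ≤ e') :
    macaulayTerm k e ≤ macaulayTerm k e' :=
  Nat.choose_le_choose _ (by omega)

lemma macaulayTerm_lt_succ (k : ℕ) (hk : 1 ≤ k) {e : ℤ} (he : -1 ≤ e) :
    macaulayTerm k e < macaulayTerm k (e + 1) := by
  obtain ⟨m, rfl⟩ : ∃ m, k = m + 1 := ⟨k - 1, by omega⟩
  set n : ℕ := (((m + 1 : ℕ) : ℤ) + e).toNat with hn
  have h1 : (((m + 1 : ℕ) : ℤ) + (e + 1)).toNat = n + 1 := by omega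
  have h2 : m ≤ n := by omega
  unfold macaulayTerm
  rw [h1, ← hn, Nat.choose_succ_succ]
  have := Nat.choose_pos h2
  simp only [Nat.succ_eq_add_one]
  omega

lemma macaulayTerm_pascal (k : ℕ) {e : ℤ} (he : -1 ≤ e) :
    macaulayTerm (k + 1) (e + 1) = macaulayTerm k (e + 1) + macaulayTerm (k + 1) e := by
  set m : ℕ := ((k : ℤ) + 1 + e).toNat with hm
  have h1 : (((k + 1 : ℕ) : ℤ) + (e + 1)).toNat = m + 1 := by push_cast; omega
  have h2 : ((k : ℤ) + (e + 1)).toNat = m := by omega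
  have h3 : (((k + 1 : ℕ) : ℤ) + e).toNat = m := by push_cast; omega
  unfold macaulayTerm
  rw [h1, h2, h3, Nat.choose_succ_succ]

/-- Core lemma: the partial sum of a Macaulay-type expansion is strictly bounded by the
next binomial coefficient at the top index. -/
lemma macaulay_core (s : ℕ) (hs : 1 ≤ s) (ε : ℕ → ℤ) :
    ∀ j : ℕ, (∀ i, i < j → ε i ≤ ε (i + 1)) → (∀ i, i ≤ j → -1 ≤ ε i) →
      ∑ i ∈ Finset.range (j + 1), macaulayTerm (i + s) (ε i)
        < macaulayTerm (j + s) (ε j + 1) := by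
  intro j
  induction j with
  | zero =>
      intro _ hlb
      simpa using macaulayTerm_lt_succ s hs (hlb 0 le_rfl)
  | succ j ih =>
      intro hmono hlb
      have hIH := ih (fun i hi => hmono i (by omega)) (fun i hi => hlb i (by omega))
      rw [Finset.sum_range_succ]
      have h1 : macaulayTerm (j + s) (ε j + 1) ≤ macaulayTerm (j + s) (ε (j + 1) + 1) :=
        macaulayTerm_mono _ (by have := hmono j (by omega); omega)
      have h2 : macaulayTerm (j + s) (ε (j + 1) + 1) + macaulayTerm (j + s + 1) (ε (j + 1))
          = macaulayTerm (j + s + 1) (ε (j + 1) + 1) :=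
        (macaulayTerm_pascal (j + s) (hlb (j + 1) le_rfl)).symm
      have h3 : j + 1 + s = j + s + 1 := by omega
      rw [h3]
      omega

/-- If `ε < ε'` in top-down lexicographic order (with `ε` a valid expansion tail),
then the corresponding shifted sums compare strictly. -/
lemma macaulay_sum_lt (d : ℕ) (ε ε' : Fin d → ℤ) (hm : Monotone ε) (hlb : ∀ i, -1 ≤ ε i)
    (j : Fin d) (hj : ε j < ε' j) (heq : ∀ i : Fin d, j < i → ε i = ε' i)
    (s : ℕ) (hs : 1 ≤ s) :
    ∑ i : Fin d, macaulayTerm (i.1 + s) (ε i) < ∑ i : Fin d, macaulayTerm (i.1 + s) (ε' i) := by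
  set εn : ℕ → ℤ := fun i => if h : i < d then ε ⟨i, h⟩ else 0 with hεn
  set εn' : ℕ → ℤ := fun i => if h : i < d then ε' ⟨i, h⟩ else 0 with hεn'
  set f : ℕ → ℕ := fun i => macaulayTerm (i + s) (εn i) with hf
  set g : ℕ → ℕ := fun i => macaulayTerm (i + s) (εn' i) with hg
  have hfFin : ∀ i : Fin d, macaulayTerm (i.1 + s) (ε i) = f i.1 := by
    intro i; simp [hf, hεn, i.2]
  have hgFin : ∀ i : Fin d, macaulayTerm (i.1 + s) (ε' i) = g i.1 := by
    intro i; simp [hg, hεn', i.2]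
  calc ∑ i : Fin d, macaulayTerm (i.1 + s) (ε i)
      = ∑ i ∈ Finset.range d, f i := by
        rw [← Fin.sum_univ_eq_sum_range f d]; exact Finset.sum_congr rfl fun i _ => hfFin i
    _ = ∑ i ∈ Finset.range (j.1 + 1), f i + ∑ i ∈ Finset.Ico (j.1 + 1) d, f i := by
        rw [Finset.range_eq_Ico, ← Finset.sum_Ico_consecutive f (Nat.zero_le _) j.2,
          ← Finset.range_eq_Ico]
    _ < ∑ i ∈ Finset.range (j.1 + 1), g i + ∑ i ∈ Finset.Ico (j.1 + 1) d, g i := by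
        have htail : ∑ i ∈ Finset.Ico (j.1 + 1) d, f i = ∑ i ∈ Finset.Ico (j.1 + 1) d, g i := by
          refine Finset.sum_congr rfl fun i hi => ?_
          rw [Finset.mem_Ico] at hi
          have hid : i < d := hi.2
          have : ε ⟨i, hid⟩ = ε' ⟨i, hid⟩ := heq ⟨i, hid⟩ (by simp [Fin.lt_def]; omega)
          simp [hf, hg, hεn, hεn', hid, this]
        have hhead : ∑ i ∈ Finset.range (j.1 + 1), f i < ∑ i ∈ Finset.range (j.1 + 1), g i := by
          have hcore : ∑ i ∈ Finset.range (j.1 + 1), macaulayTerm (i + s) (εn i)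
              < macaulayTerm (j.1 + s) (εn j.1 + 1) := by
            refine macaulay_core s hs εn j.1 (fun i hi => ?_) (fun i hi => ?_)
            · have hi1 : i < d := by omega
              have hi2 : i + 1 < d := by omega
              simp only [hεn, dif_pos hi1, dif_pos hi2]
              exact hm (by simp [Fin.le_def])
            · have hi1 : i < d := by omega
              simp only [hεn, dif_pos hi1]
              exact hlb _
          have hεnj : εn j.1 = ε j := by simp [hεn, j.2]
          have h1 : macaulayTerm (j.1 + s) (εn j.1 + 1) ≤ macaulayTerm (j.1 + s) (εn' j.1) := by
            refine macaulayTerm_mono _ ?_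
            have : εn' j.1 = ε' j := by simp [hεn', j.2]
            rw [hεnj, this]; omega
          have h2 : g j.1 ≤ ∑ i ∈ Finset.range (j.1 + 1), g i :=
            Finset.single_le_sum (fun i _ => Nat.zero_le _) (Finset.self_mem_range_succ j.1)
          calc ∑ i ∈ Finset.range (j.1 + 1), f i < macaulayTerm (j.1 + s) (εn j.1 + 1) := hcore
            _ ≤ macaulayTerm (j.1 + s) (εn' j.1) := h1
            _ = g j.1 := rfl
            _ ≤ _ := h2
        omega
    _ = ∑ i ∈ Finset.range d, g i := by
        rw [show Finset.range d = Finset.Ico 0 d by rw [Finset.range_eq_Ico],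
          ← Finset.sum_Ico_consecutive g (Nat.zero_le _) j.2,
          ← Finset.range_eq_Ico]
    _ = ∑ i : Fin d, macaulayTerm (i.1 + s) (ε' i) := by
        rw [← Fin.sum_univ_eq_sum_range g d]
        exact (Finset.sum_congr rfl fun i _ => hgFin i).symm

/-- the map `c ↦ c^{⟨d⟩}` is weakly increasing in `c`. -/
theorem macaulayUpper_mono (d c c' : ℕ) (ε ε' : Fin d → ℤ)
    (h : IsMacaulayExpansion d c ε) (h' : IsMacaulayExpansion d c' ε')
    (hcc : c ≤ c') :
    macaulayUpper d ε ≤ macaulayUpper d ε' := by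
  obtain ⟨hmε, hlbε, hc⟩ := h
  obtain ⟨hmε', hlbε', hc'⟩ := h'
  by_cases hall : ∀ i, ε i = ε' i
  · exact le_of_eq (Finset.sum_congr rfl fun i _ => by rw [hall i])
  · push_neg at hall
    set T : Finset (Fin d) := Finset.univ.filter (fun i => ε i ≠ ε' i) with hT
    have hTne : T.Nonempty := by
      obtain ⟨i, hi⟩ := hall
      exact ⟨i, by simp [hT, hi]⟩
    set j : Fin d := T.max' hTne with hjdef
    have hjT : j ∈ T := T.max'_mem hTne
    have hjne : ε j ≠ ε' j := by simpa [hT] using hjT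
    have htop : ∀ i : Fin d, j < i → ε i = ε' i := by
      intro i hi
      by_contra hne
      have : i ∈ T := by simp [hT, hne]
      exact absurd (T.le_max' i this) (not_le.mpr hi)
    rcases lt_trichotomy (ε j) (ε' j) with hlt | heqj | hgt
    · exact le_of_lt (macaulay_sum_lt d ε ε' hmε hlbε j hlt htop 2 (by omega))
    · exact absurd heqj hjne
    · exfalso
      have : c' < c := by
        rw [hc, hc']
        exact macaulay_sum_lt d ε' ε hmε' hlbε' j hgt (fun i hi => (htop i hi).symm) 1 le_rfl
      omega
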